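/- Let H be a finite group, S ⊆ H with 1 ∉ S and S = S⁻¹, and suppose Cay(H,S) is connected and non-bipartite. Set G = H × ⟨a⟩ with a of order 2. Then Cay(H,S) is unstable if and only if there exists a Schurian Schur ring A over G such that Σ_{h∈H} h ∈ A, Σ_{s∈S} sa ∈ A, and a ∉ A (i.e., the singleton {a} is not an A-set). -/

import Mathlib

open scoped Pointwise

noncomputable def clsum {G : Type*} [Group G] [Fintype G] (s : Set G) :
    MonoidAlgebra ℤ G :=
  ∑ x ∈ s.toFinite.toFinset, MonoidAlgebra.of ℤ G x

structure SchurRing (G : Type*) [Group G] [Fintype G] where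
  P : Set (Set G)
  one_mem : ({(1 : G)} : Set G) ∈ P
  nonempty_cls : ∀ X ∈ P, X.Nonempty
  cover : ∀ g : G, ∃ X ∈ P, g ∈ X
  disj : ∀ X ∈ P, ∀ Y ∈ P, X ≠ Y → Disjoint X Y
  inv_mem : ∀ X ∈ P, X⁻¹ ∈ P
  mul_closed : ∀ X ∈ P, ∀ Y ∈ P,
    clsum X * clsum Y ∈ Submodule.span ℤ (clsum '' P)

def SchurRing.isASet {G : Type*} [Group G] [Fintype G] (A : SchurRing G) (X : Set G) : Prop :=
  clsum X ∈ Submodule.span ℤ (clsum '' A.P)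


def cayley (H : Type*) [Group H] (S : Set H) : SimpleGraph H where
  Adj x y := x ≠ y ∧ (y * x⁻¹ ∈ S ∨ x * y⁻¹ ∈ S)
  symm := by
    refine ⟨fun x y h => ?_⟩
    exact ⟨h.1.symm, h.2.symm⟩
  loopless := by
    refine ⟨fun x h => ?_⟩
    exact h.1 rfl

def doubleCover {V : Type*} (Γ : SimpleGraph V) : SimpleGraph (V × ZMod 2) where
  Adj x y := Γ.Adj x.1 y.1 ∧ x.2 ≠ y.2
  symm := by
    refine ⟨fun x y h => ?_⟩
    exact ⟨h.1.symm, h.2.symm⟩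
  loopless := by
    refine ⟨fun x h => ?_⟩
    exact h.2 rfl

def autGroup {V : Type*} (Γ : SimpleGraph V) : Subgroup (Equiv.Perm V) where
  carrier := {σ | ∀ u v, Γ.Adj (σ u) (σ v) ↔ Γ.Adj u v}
  one_mem' := by intro u v; rfl
  mul_mem' := by
    intro a b ha hb u v
    exact (ha (b u) (b v)).trans (hb u v)
  inv_mem' := by
    intro a ha u v
    conv_rhs => rw [← Equiv.apply_symm_apply a u, ← Equiv.apply_symm_apply a v]
    exact (ha _ _).symm

def Unstable {V : Type*} (Γ : SimpleGraph V) : Prop :=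
  ¬ Nonempty (↥(autGroup (doubleCover Γ)) ≃* (↥(autGroup Γ) × Multiplicative (ZMod 2)))

/-- A Schur ring is Schurian if its basic sets are the orbits of the stabilizer of the
identity in some overgroup of the right regular representation. -/
def IsSchurian {G : Type*} [Group G] [Fintype G] (A : SchurRing G) : Prop :=
  ∃ B : Subgroup (Equiv.Perm G), (∀ g : G, Equiv.mulRight g ∈ B) ∧
    A.P = {X : Set G | ∃ g : G, X = MulAction.orbit (MulAction.stabilizer B (1 : G)) g}


section Part1

variable {G : Type*} [Group G] [Fintype G]

open Classical in
lemma clsum_apply (s : Set G) (g : G) : (clsum s).coeff g = if g ∈ s then 1 else 0 := by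
  classical
  unfold clsum
  rw [MonoidAlgebra.coeff_sum, Finset.sum_apply']
  rw [show (∑ x ∈ s.toFinite.toFinset, (MonoidAlgebra.of ℤ G x).coeff g)
      = ∑ x ∈ s.toFinite.toFinset, if x = g then (1:ℤ) else 0 from
    Finset.sum_congr rfl fun x _ => by
      simp [MonoidAlgebra.of_apply, MonoidAlgebra.coeff_single, Finsupp.single_apply]]
  rw [Finset.sum_ite_eq' s.toFinite.toFinset g (fun _ => (1:ℤ))]
  simp only [Set.Finite.mem_toFinset]

lemma sub_smul_apply (f x : MonoidAlgebra ℤ G) (c : ℤ) (h : G) :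
    (f - c • x).coeff h = f.coeff h - c * x.coeff h := by
  rw [MonoidAlgebra.coeff_sub, Finsupp.sub_apply, MonoidAlgebra.coeff_smul, Finsupp.smul_apply]; rfl

variable (B : Subgroup (Equiv.Perm G))

local notation "K" => MulAction.stabilizer B (1 : G)

lemma smul_mem_orbit_iff (c : K) {g h : G} :
    ((c : B) : Equiv.Perm G) g ∈ MulAction.orbit K h ↔ g ∈ MulAction.orbit K h := by
  constructor
  · rintro ⟨k, hk⟩
    refine ⟨c⁻¹ * k, ?_⟩
    have hk' : k • h = ((c : B) : Equiv.Perm G) g := hk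
    show (c⁻¹ * k) • h = g
    rw [mul_smul, hk']
    show c⁻¹ • (c • g) = g
    exact inv_smul_smul c g
  · rintro ⟨k, hk⟩
    refine ⟨c * k, ?_⟩
    have hk' : k • h = g := hk
    show (c * k) • h = ((c : B) : Equiv.Perm G) g
    rw [mul_smul, hk']
    rfl

/-- If the coefficients of `f` are constant on `K`-orbits then `f` lies in the span of
orbit class sums. -/
lemma mem_span_of_const (f : MonoidAlgebra ℤ G)
    (hf : ∀ (c : K) (g : G), f.coeff (((c : B) : Equiv.Perm G) g) = f.coeff g) :
    f ∈ Submodule.span ℤ (clsum '' {X : Set G | ∃ g : G, X = MulAction.orbit K g}) := by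
  classical
  generalize hn : f.coeff.support.card = n
  induction n using Nat.strong_induction_on generalizing f with
  | _ n ih =>
    by_cases hf0 : f = 0
    · simp [hf0]
    · obtain ⟨g, hg⟩ := Finsupp.support_nonempty_iff.mpr (mt MonoidAlgebra.coeff_eq_zero.mp hf0)
      set X : Set G := MulAction.orbit K g with hX
      have hXmem : ∀ {h : G}, h ∈ X → f.coeff h = f.coeff g := by
        rintro h ⟨k, hk⟩
        have hk' : ((k : B) : Equiv.Perm G) g = h := hk
        rw [← hk', hf]
      have happ : ∀ h : G, (f - f.coeff g • clsum X).coeff h = f.coeff h - f.coeff g * (if h ∈ X then 1 else 0) := by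
        intro h
        rw [sub_smul_apply, clsum_apply]
      have hsupp : (f - f.coeff g • clsum X).coeff.support ⊆ f.coeff.support \ X.toFinite.toFinset := by
        intro h hh
        rw [Finsupp.mem_support_iff, happ] at hh
        by_cases hhX : h ∈ X
        · exfalso; rw [hXmem hhX, if_pos hhX] at hh; simp at hh
        · rw [if_neg hhX, mul_zero, sub_zero] at hh
          rw [Finset.mem_sdiff, Finsupp.mem_support_iff, Set.Finite.mem_toFinset]
          exact ⟨hh, hhX⟩
      have hcard : (f - f.coeff g • clsum X).coeff.support.card < n := by
        rw [← hn]
        apply Finset.card_lt_card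
        constructor
        · exact hsupp.trans Finset.sdiff_subset
        · intro hsub
          have := hsupp (hsub hg)
          simp only [Finset.mem_sdiff] at this
          exact this.2 (by
            rw [Set.Finite.mem_toFinset]
            exact MulAction.mem_orbit_self g)
      have hf'const : ∀ (c : K) (h : G),
          (f - f.coeff g • clsum X).coeff (((c : B) : Equiv.Perm G) h) = (f - f.coeff g • clsum X).coeff h := by
        intro c h
        rw [happ, happ, hf]
        congr 2
        exact if_congr (smul_mem_orbit_iff B c) rfl rfl
      have hf'mem := ih _ hcard _ hf'const rfl
      have hclX : clsum X ∈ Submodule.span ℤ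
          (clsum '' {X : Set G | ∃ g : G, X = MulAction.orbit K g}) :=
        Submodule.subset_span ⟨X, ⟨g, rfl⟩, rfl⟩
      have : f = (f - f.coeff g • clsum X) + f.coeff g • clsum X := (sub_add_cancel f _).symm
      rw [this]
      exact Submodule.add_mem _ hf'mem (Submodule.smul_mem _ _ hclX)

/-- Membership in the span of orbit class sums is equivalent to invariance. -/
lemma isaset_iff_invariant (s : Set G) :
    clsum s ∈ Submodule.span ℤ (clsum '' {X : Set G | ∃ g : G, X = MulAction.orbit K g})
      ↔ ∀ (c : K) (g : G), g ∈ s → ((c : B) : Equiv.Perm G) g ∈ s := by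
  classical
  constructor
  · intro hmem c g hg
    have hconst : ∀ f ∈ Submodule.span ℤ
        (clsum '' {X : Set G | ∃ g : G, X = MulAction.orbit K g}),
        ∀ (c : K) (g : G), f.coeff (((c : B) : Equiv.Perm G) g) = f.coeff g := by
      intro f hf
      induction hf using Submodule.span_induction with
      | mem x hx =>
        obtain ⟨X, ⟨g₀, rfl⟩, rfl⟩ := hx
        intro c g
        rw [clsum_apply, clsum_apply]
        exact if_congr (smul_mem_orbit_iff B c) rfl rfl
      | zero => intro c g; simp
      | add x y _ _ hx hy =>
        intro c g
        rw [MonoidAlgebra.coeff_add, Finsupp.add_apply, Finsupp.add_apply, hx, hy]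
      | smul a x _ hx =>
        intro c g
        rw [MonoidAlgebra.coeff_smul, Finsupp.smul_apply, Finsupp.smul_apply, hx]
    have := hconst _ hmem c g
    rw [clsum_apply, clsum_apply, if_pos hg] at this
    by_contra hmem'
    rw [if_neg hmem'] at this
    exact one_ne_zero this.symm
  · intro hinv
    apply mem_span_of_const
    intro c g
    rw [clsum_apply, clsum_apply]
    refine if_congr ⟨fun h => ?_, hinv c g⟩ rfl rfl
    have := hinv c⁻¹ _ h
    rwa [show ((c⁻¹ : K) : Equiv.Perm G) (((c : K) : Equiv.Perm G) g) = g from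
      inv_smul_smul c g] at this

end Part1


section Part2

variable {G : Type*} [Group G] [Fintype G]
variable (B : Subgroup (Equiv.Perm G))

local notation "K" => MulAction.stabilizer B (1 : G)

lemma stab_apply_one (c : K) : ((c : B) : Equiv.Perm G) 1 = 1 := c.2

/-- Given `b ∈ B` and `y`, the map `x ↦ b(x*y)*(b y)⁻¹` is in `K`. -/
lemma exists_translate (hB : ∀ g : G, Equiv.mulRight g ∈ B) (cp : Equiv.Perm G)
    (hcpB : cp ∈ B) (y : G) :
    ∃ d : K, ∀ x : G,
      ((d : B) : Equiv.Perm G) x = cp (x * y) * (cp y)⁻¹ := by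
  set p : Equiv.Perm G := Equiv.mulRight ((cp y)⁻¹) * cp * Equiv.mulRight y with hp
  have hpB : p ∈ B := by
    exact B.mul_mem (B.mul_mem (hB _) hcpB) (hB _)
  have hpeval : ∀ x : G, p x = cp (x * y) * (cp y)⁻¹ := by
    intro x
    simp [hp, Equiv.Perm.mul_apply]
  have hp1 : (⟨p, hpB⟩ : B) • (1 : G) = 1 := by
    show p 1 = 1
    rw [hpeval, one_mul, mul_inv_cancel]
  exact ⟨⟨⟨p, hpB⟩, hp1⟩, hpeval⟩

lemma inv_orbit_subset (hB : ∀ g : G, Equiv.mulRight g ∈ B) (g : G) :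
    (MulAction.orbit K g)⁻¹ ⊆ MulAction.orbit K g⁻¹ := by
  rintro x hx
  rw [Set.mem_inv] at hx
  obtain ⟨c, hc⟩ := hx
  have hc' : ((c : B) : Equiv.Perm G) g = x⁻¹ := hc
  obtain ⟨d, hd⟩ := exists_translate B hB _ ((c : B)).2 g
  refine ⟨d, ?_⟩
  show ((d : B) : Equiv.Perm G) g⁻¹ = x
  rw [hd, inv_mul_cancel, stab_apply_one, hc']
  simp

lemma orbit_inv (hB : ∀ g : G, Equiv.mulRight g ∈ B) (g : G) :
    (MulAction.orbit K g)⁻¹ = MulAction.orbit K g⁻¹ := by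
  apply Set.Subset.antisymm (inv_orbit_subset B hB g)
  intro x hx
  rw [Set.mem_inv]
  have : x⁻¹ ∈ (MulAction.orbit K g⁻¹)⁻¹ := by
    rw [Set.mem_inv, inv_inv]; exact hx
  have := inv_orbit_subset B hB g⁻¹ this
  rwa [inv_inv] at this

open Classical in
lemma clsum_mul_apply (X Y : Set G) (g : G) :
    (clsum X * clsum Y).coeff g = ∑ p ∈ X.toFinite.toFinset ×ˢ Y.toFinite.toFinset,
      if p.1 * p.2 = g then (1:ℤ) else 0 := by
  classical
  have h1 : clsum X * clsum Y
      = ∑ x ∈ X.toFinite.toFinset, ∑ y ∈ Y.toFinite.toFinset,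
          MonoidAlgebra.of ℤ G (x * y) := by
    unfold clsum
    rw [Finset.sum_mul_sum]
    exact Finset.sum_congr rfl fun x _ => Finset.sum_congr rfl fun y _ =>
      (map_mul (MonoidAlgebra.of ℤ G) x y).symm
  rw [h1, ← Finset.sum_product', MonoidAlgebra.coeff_sum, Finset.sum_apply']
  refine Finset.sum_congr rfl fun p _ => ?_
  rw [MonoidAlgebra.of_apply, MonoidAlgebra.coeff_single, Finsupp.single_apply]

lemma mul_coeff_invariant (hB : ∀ g : G, Equiv.mulRight g ∈ B) (g₁ g₂ : G)
    (c : K) (g : G) :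
    (clsum (MulAction.orbit K g₁) * clsum (MulAction.orbit K g₂)).coeff
        (((c : B) : Equiv.Perm G) g)
      = (clsum (MulAction.orbit K g₁) * clsum (MulAction.orbit K g₂)).coeff g := by
  classical
  rw [clsum_mul_apply, clsum_mul_apply]
  set cp : Equiv.Perm G := ((c : B) : Equiv.Perm G) with hcp
  set cq : Equiv.Perm G := (((c⁻¹ : K) : B) : Equiv.Perm G) with hcq
  have hcinv : ∀ z : G, cq (cp z) = z := fun z => by
    show ((c⁻¹ * c : K) : B) • z = z
    rw [inv_mul_cancel]; rfl
  have hcinv' : ∀ z : G, cp (cq z) = z := fun z => by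
    show ((c * c⁻¹ : K) : B) • z = z
    rw [mul_inv_cancel]; rfl
  set X' := (MulAction.orbit K g₁).toFinite.toFinset with hX'
  set Y' := (MulAction.orbit K g₂).toFinite.toFinset with hY'
  have hmemX : ∀ {z : G}, z ∈ X' ↔ z ∈ MulAction.orbit K g₁ := fun {z} =>
    Set.Finite.mem_toFinset _
  have hmemY : ∀ {z : G}, z ∈ Y' ↔ z ∈ MulAction.orbit K g₂ := fun {z} =>
    Set.Finite.mem_toFinset _
  refine (Finset.sum_nbij'
    (fun p => (cq (p.1 * p.2) * (cq p.2)⁻¹, cq p.2))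
    (fun p => (cp (p.1 * p.2) * (cp p.2)⁻¹, cp p.2)) ?_ ?_ ?_ ?_ ?_)
  · rintro ⟨x, y⟩ hp
    rw [Finset.mem_product] at hp ⊢
    obtain ⟨d, hd⟩ := exists_translate B hB cq (((c⁻¹ : K) : B)).2 y
    constructor
    · show cq (x * y) * (cq y)⁻¹ ∈ X'
      rw [hmemX, ← hd x]
      exact (smul_mem_orbit_iff B d).mpr (hmemX.mp hp.1)
    · show cq y ∈ Y'
      rw [hmemY]
      exact (smul_mem_orbit_iff B c⁻¹).mpr (hmemY.mp hp.2)
  · rintro ⟨x, y⟩ hp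
    rw [Finset.mem_product] at hp ⊢
    obtain ⟨d, hd⟩ := exists_translate B hB cp ((c : B)).2 y
    constructor
    · show cp (x * y) * (cp y)⁻¹ ∈ X'
      rw [hmemX, ← hd x]
      exact (smul_mem_orbit_iff B d).mpr (hmemX.mp hp.1)
    · show cp y ∈ Y'
      rw [hmemY]
      exact (smul_mem_orbit_iff B c).mpr (hmemY.mp hp.2)
  · rintro ⟨x, y⟩ _
    simp only [Prod.mk.injEq]
    constructor
    · rw [inv_mul_cancel_right, hcinv', hcinv', mul_inv_cancel_right]
    · exact hcinv' y
  · rintro ⟨x, y⟩ _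
    simp only [Prod.mk.injEq]
    constructor
    · rw [inv_mul_cancel_right, hcinv, hcinv, mul_inv_cancel_right]
    · exact hcinv y
  · rintro ⟨x, y⟩ _
    refine if_congr ?_ rfl rfl
    show x * y = cp g ↔ cq (x * y) * (cq y)⁻¹ * cq y = g
    rw [inv_mul_cancel_right]
    constructor
    · intro h; rw [h, hcinv]
    · intro h; rw [← h, hcinv']

/-- The transitivity module of an overgroup of the right regular representation. -/
noncomputable def transModule (hB : ∀ g : G, Equiv.mulRight g ∈ B) : SchurRing G where
  P := {X : Set G | ∃ g : G, X = MulAction.orbit K g}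
  one_mem := by
    refine ⟨1, ?_⟩
    ext x
    simp only [Set.mem_singleton_iff]
    constructor
    · rintro rfl; exact MulAction.mem_orbit_self 1
    · rintro ⟨k, hk⟩
      have : ((k : B) : Equiv.Perm G) 1 = x := hk
      rw [← this, stab_apply_one]
  nonempty_cls := by
    rintro X ⟨g, rfl⟩
    exact ⟨g, MulAction.mem_orbit_self g⟩
  cover := fun g => ⟨MulAction.orbit K g, ⟨g, rfl⟩, MulAction.mem_orbit_self g⟩
  disj := by
    rintro X ⟨g, rfl⟩ Y ⟨h, rfl⟩ hne
    rw [Set.disjoint_left]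
    intro z hzg hzh
    exact hne ((MulAction.orbit_eq_iff.mpr hzg).symm.trans
      (MulAction.orbit_eq_iff.mpr hzh))
  inv_mem := by
    rintro X ⟨g, rfl⟩
    exact ⟨g⁻¹, orbit_inv B hB g⟩
  mul_closed := by
    rintro X ⟨g₁, rfl⟩ Y ⟨g₂, rfl⟩
    exact mem_span_of_const B _ (mul_coeff_invariant B hB g₁ g₂)

lemma transModule_isSchurian (hB : ∀ g : G, Equiv.mulRight g ∈ B) :
    IsSchurian (transModule B hB) :=
  ⟨B, hB, rfl⟩

lemma transModule_isASet_iff (hB : ∀ g : G, Equiv.mulRight g ∈ B) (s : Set G) :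
    (transModule B hB).isASet s ↔
      ∀ (c : K) (g : G), g ∈ s → ((c : B) : Equiv.Perm G) g ∈ s :=
  isaset_iff_invariant B s

end Part2

section Part3

variable {H : Type*} [Group H] [Fintype H]

/-- The connection set of the canonical double cover as a Cayley graph. -/
def Sa (S : Set H) : Set (H × Multiplicative (ZMod 2)) :=
  (fun s => (s, Multiplicative.ofAdd (1 : ZMod 2))) '' S

lemma M2_cases (t : Multiplicative (ZMod 2)) :
    t = 1 ∨ t = Multiplicative.ofAdd 1 := by
  revert t; decide

lemma M2_mul_inv_iff (u v : Multiplicative (ZMod 2)) :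
    v * u⁻¹ = Multiplicative.ofAdd 1 ↔ u ≠ v := by
  revert u v; decide

variable {S : Set H}

lemma cayley_adj (h1 : (1 : H) ∉ S) (hS : S⁻¹ = S) {x y : H} :
    (cayley H S).Adj x y ↔ y * x⁻¹ ∈ S := by
  constructor
  · rintro ⟨hne, h | h⟩
    · exact h
    · rw [← hS, Set.mem_inv]
      simpa using h
  · intro h
    refine ⟨fun hxy => ?_, Or.inl h⟩
    subst hxy
    rw [mul_inv_cancel] at h
    exact h1 h

lemma mem_Sa {p : H × Multiplicative (ZMod 2)} :
    p ∈ Sa S ↔ p.1 ∈ S ∧ p.2 = Multiplicative.ofAdd 1 := by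
  constructor
  · rintro ⟨s, hs, rfl⟩; exact ⟨hs, rfl⟩
  · rintro ⟨h1, h2⟩
    exact ⟨p.1, h1, by rw [← h2]⟩

lemma one_not_mem_Sa (h1 : (1 : H) ∉ S) : (1 : H × Multiplicative (ZMod 2)) ∉ Sa S := by
  intro h
  rw [mem_Sa] at h
  have := h.2
  rw [show ((1 : H × Multiplicative (ZMod 2))).2 = 1 from rfl] at this
  exact absurd this (by decide)

lemma Sa_inv (hS : S⁻¹ = S) : (Sa S)⁻¹ = Sa S := by
  ext p
  rw [Set.mem_inv, mem_Sa, mem_Sa]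
  constructor
  · rintro ⟨hs, ht⟩
    refine ⟨by rw [← hS, Set.mem_inv]; simpa using hs, ?_⟩
    rw [show (p⁻¹).2 = p.2⁻¹ from rfl] at ht
    rw [← inv_inv p.2, ht]
    decide
  · rintro ⟨hs, ht⟩
    constructor
    · rw [show (p⁻¹).1 = p.1⁻¹ from rfl, ← hS, Set.mem_inv, inv_inv]; exact hs
    · rw [show (p⁻¹).2 = p.2⁻¹ from rfl, ht]
      decide

lemma delta_adj (h1 : (1 : H) ∉ S) (hS : S⁻¹ = S)
    {u v : H × Multiplicative (ZMod 2)} :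
    (cayley _ (Sa S)).Adj u v ↔
      v.1 * u.1⁻¹ ∈ S ∧ v.2 * u.2⁻¹ = Multiplicative.ofAdd 1 := by
  rw [cayley_adj (one_not_mem_Sa h1) (Sa_inv hS), mem_Sa]
  rfl

lemma even_cast {n : ℕ} (h : Even n) : (n : ZMod 2) = 0 := by
  obtain ⟨k, rfl⟩ := h
  push_cast
  rw [← two_mul, show (2 : ZMod 2) = 0 from rfl, zero_mul]

lemma odd_cast {n : ℕ} (h : Odd n) : (n : ZMod 2) = 1 := by
  obtain ⟨k, rfl⟩ := h
  push_cast
  rw [show (2 : ZMod 2) = 0 from rfl, zero_mul, zero_add]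

lemma walk_parity (h1 : (1 : H) ∉ S) (hS : S⁻¹ = S)
    {u v : H × Multiplicative (ZMod 2)} (p : (cayley _ (Sa S)).Walk u v) :
    Multiplicative.toAdd v.2 = Multiplicative.toAdd u.2 + (p.length : ZMod 2) := by
  induction p with
  | nil => simp
  | cons hadj p ih =>
    rw [delta_adj h1 hS] at hadj
    obtain ⟨-, h2⟩ := hadj
    have h3 := congrArg Multiplicative.toAdd h2
    simp only [toAdd_mul, toAdd_inv, toAdd_ofAdd] at h3
    rw [SimpleGraph.Walk.length_cons]
    push_cast
    rw [ih]
    linear_combination h3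

lemma lift_reach (h1 : (1 : H) ∉ S) (hS : S⁻¹ = S) :
    ∀ {x y : H} (p : (cayley H S).Walk x y) (t : Multiplicative (ZMod 2)),
      (cayley _ (Sa S)).Reachable (x, t)
        (y, t * Multiplicative.ofAdd (p.length : ZMod 2)) := by
  intro x y p
  induction p with
  | nil =>
    intro t
    simp only [SimpleGraph.Walk.length_nil, Nat.cast_zero]
    rw [show Multiplicative.ofAdd (0 : ZMod 2) = 1 from rfl, mul_one]
  | cons hadj p ih =>
    intro t
    rename_i a b c
    have hstep : (cayley _ (Sa S)).Adj (a, t) (b, t * Multiplicative.ofAdd 1) := by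
      rw [delta_adj h1 hS]
      constructor
      · exact (cayley_adj h1 hS).mp hadj
      · show t * Multiplicative.ofAdd 1 * t⁻¹ = Multiplicative.ofAdd 1
        rw [mul_comm t, mul_assoc, mul_inv_cancel, mul_one]
    have := (hstep.reachable).trans (ih (t * Multiplicative.ofAdd 1))
    rw [SimpleGraph.Walk.length_cons]
    have heq : t * Multiplicative.ofAdd 1 * Multiplicative.ofAdd ((p.length : ZMod 2))
        = t * Multiplicative.ofAdd (((p.length + 1 : ℕ) : ZMod 2)) := by
      rw [mul_assoc, ← ofAdd_add]
      push_cast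
      rw [add_comm]
    rwa [heq] at this

lemma exists_odd_closed (h1 : (1 : H) ∉ S) (hS : S⁻¹ = S)
    (hconn : (cayley H S).Connected) (hnb : ¬ (cayley H S).Colorable 2) :
    ∃ p : (cayley H S).Walk 1 1, Odd p.length := by
  by_contra hno
  push_neg at hno
  apply hnb
  have hwalk : ∀ v : H, (cayley H S).Reachable 1 v := fun v => hconn.preconnected 1 v
  have key : ∀ (v : H) (p q : (cayley H S).Walk 1 v),
      (p.length : ZMod 2) = (q.length : ZMod 2) := by
    intro v p q
    have hcl : ¬ Odd (p.append q.reverse).length := hno _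
    rw [Nat.not_odd_iff_even] at hcl
    have := even_cast hcl
    rw [SimpleGraph.Walk.length_append, SimpleGraph.Walk.length_reverse] at this
    push_cast at this
    have hq : -(q.length : ZMod 2) = (q.length : ZMod 2) := by
      have h' : ∀ b : ZMod 2, -b = b := by decide
      exact h' _
    linear_combination this + hq
  have col : (cayley H S).Coloring (ZMod 2) := by
    refine SimpleGraph.Coloring.mk (fun v => (((hwalk v).some.length : ℕ) : ZMod 2)) ?_
    intro u v hadj heq
    have hconcat := key v ((hwalk u).some.concat hadj) (hwalk v).some
    rw [SimpleGraph.Walk.length_concat] at hconcat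
    push_cast at hconcat
    have heq' : (((hwalk u).some.length : ℕ) : ZMod 2)
        = (((hwalk v).some.length : ℕ) : ZMod 2) := heq
    have : (1 : ZMod 2) = 0 := by linear_combination hconcat - heq'
    exact absurd this (by decide)
  have := col.colorable
  rwa [ZMod.card 2] at this

/-- Right translation as a graph homomorphism of the Cayley graph. -/
def rtHom (h1 : (1 : H) ∉ S) (hS : S⁻¹ = S) (h : H) :
    cayley H S →g cayley H S where
  toFun := fun x => x * h
  map_rel' := by
    intro a b hab
    rw [cayley_adj h1 hS] at hab ⊢
    simpa [mul_assoc] using hab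

lemma delta_conn (h1 : (1 : H) ∉ S) (hS : S⁻¹ = S)
    (hconn : (cayley H S).Connected) (hnb : ¬ (cayley H S).Colorable 2) :
    (cayley _ (Sa S)).Connected := by
  obtain ⟨w, hw⟩ := exists_odd_closed h1 hS hconn hnb
  have base : ∀ v : H × Multiplicative (ZMod 2),
      (cayley _ (Sa S)).Reachable (1, 1) v := by
    rintro ⟨h, t⟩
    obtain ⟨p⟩ := hconn.preconnected 1 h
    have r1 := lift_reach h1 hS p 1
    rw [one_mul] at r1
    rcases M2_cases (t * (Multiplicative.ofAdd ((p.length : ZMod 2)))⁻¹) with hc | hc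
    · have : t = Multiplicative.ofAdd ((p.length : ZMod 2)) := by
        have := congrArg (· * Multiplicative.ofAdd ((p.length : ZMod 2))) hc
        simpa [inv_mul_cancel_right] using this
      rwa [← this] at r1
    · -- need an extra odd closed walk at h
      set wh : (cayley H S).Walk h h :=
        ((w.map (rtHom h1 hS h)).copy (one_mul h) (one_mul h)) with hwhdef
      have hwh : Odd wh.length := by
        have hl : wh.length = w.length :=
          (SimpleGraph.Walk.length_copy _ _ _).trans (SimpleGraph.Walk.length_map _ _)
        rw [hl]
        exact hw
      have r2 := lift_reach h1 hS wh (Multiplicative.ofAdd ((p.length : ZMod 2)))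
      rw [odd_cast hwh] at r2
      have : Multiplicative.ofAdd ((p.length : ZMod 2)) * Multiplicative.ofAdd (1 : ZMod 2)
          = t := by
        have := congrArg (· * Multiplicative.ofAdd ((p.length : ZMod 2))) hc
        simp only [inv_mul_cancel_right] at this
        rw [this, mul_comm]
      rw [this] at r2
      exact r1.trans r2
  constructor
  intro u v
  exact (base u).symm.trans (base v)

/-- Automorphisms of the double cover preserve parity differences. -/
lemma aut_parity (h1 : (1 : H) ∉ S) (hS : S⁻¹ = S)
    (hconn : (cayley H S).Connected) (hnb : ¬ (cayley H S).Colorable 2)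
    {b : Equiv.Perm (H × Multiplicative (ZMod 2))} (hb : b ∈ autGroup (cayley _ (Sa S)))
    (u v : H × Multiplicative (ZMod 2)) :
    Multiplicative.toAdd (b v).2 - Multiplicative.toAdd (b u).2
      = Multiplicative.toAdd v.2 - Multiplicative.toAdd u.2 := by
  obtain ⟨p⟩ := (delta_conn h1 hS hconn hnb).preconnected u v
  have bh : cayley _ (Sa S) →g cayley _ (Sa S) :=
    ⟨b, fun {x y} hxy => (hb x y).mpr hxy⟩
  have hp1 := walk_parity h1 hS p
  have hp2 := walk_parity h1 hS (p.map ⟨b, fun {x y} hxy => (hb x y).mpr hxy⟩)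
  rw [SimpleGraph.Walk.length_map] at hp2
  show Multiplicative.toAdd ((⟨b, fun {x y} hxy => (hb x y).mpr hxy⟩ :
      cayley _ (Sa S) →g cayley _ (Sa S)) v).2 - _ = _
  linear_combination hp2 - hp1

end Part3

section Part4

lemma mem_autGroup_iff {V : Type*} {Γ : SimpleGraph V} {σ : Equiv.Perm V} :
    σ ∈ autGroup Γ ↔ ∀ u v, Γ.Adj (σ u) (σ v) ↔ Γ.Adj u v := Iff.rfl

lemma cayley_adj_right_invariant {G : Type*} [Group G] (T : Set G) (g u v : G) :
    (cayley G T).Adj (u * g) (v * g) ↔ (cayley G T).Adj u v := by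
  show (u * g ≠ v * g ∧ ((v * g) * (u * g)⁻¹ ∈ T ∨ (u * g) * (v * g)⁻¹ ∈ T)) ↔
    (u ≠ v ∧ (v * u⁻¹ ∈ T ∨ u * v⁻¹ ∈ T))
  have e1 : (v * g) * (u * g)⁻¹ = v * u⁻¹ := by group
  have e2 : (u * g) * (v * g)⁻¹ = u * v⁻¹ := by group
  rw [e1, e2]
  constructor
  · rintro ⟨hne, h⟩
    exact ⟨fun he => hne (by rw [he]), h⟩
  · rintro ⟨hne, h⟩
    exact ⟨fun he => hne (mul_right_cancel he), h⟩

lemma mulRight_mem_autGroup {G : Type*} [Group G] (T : Set G) (g : G) :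
    Equiv.mulRight g ∈ autGroup (cayley G T) := by
  rw [mem_autGroup_iff]
  intro u v
  simpa using cayley_adj_right_invariant T g u v

/-- Transport of graph automorphism groups along an isomorphism of graphs. -/
def autGroupCongr {V W : Type*} (e : V ≃ W) (Γ : SimpleGraph V) (Γ' : SimpleGraph W)
    (h : ∀ u v, Γ'.Adj (e u) (e v) ↔ Γ.Adj u v) :
    ↥(autGroup Γ) ≃* ↥(autGroup Γ') := by
  have h' : ∀ u v : W, Γ.Adj (e.symm u) (e.symm v) ↔ Γ'.Adj u v := by
    intro u v
    rw [← h, Equiv.apply_symm_apply, Equiv.apply_symm_apply]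
  refine
  { toFun := fun σ => ⟨e.permCongr σ, ?_⟩
    invFun := fun τ => ⟨e.permCongr.symm τ, ?_⟩
    left_inv := fun σ => Subtype.ext (e.permCongr.symm_apply_apply σ)
    right_inv := fun τ => Subtype.ext (e.permCongr.apply_symm_apply τ)
    map_mul' := fun σ τ => Subtype.ext (by
      ext x
      simp [Equiv.permCongr_apply, Equiv.Perm.mul_apply]) }
  · rw [mem_autGroup_iff]
    intro u v
    simp only [Equiv.permCongr_apply]
    rw [h, (σ.2 : _ ∈ autGroup Γ) (e.symm u) (e.symm v), h']
  · rw [mem_autGroup_iff]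
    intro u v
    simp only [Equiv.permCongr_symm_apply]
    rw [h', (τ.2 : _ ∈ autGroup Γ') (e u) (e v), h]

variable {H : Type*} [Group H] [Fintype H] {S : Set H}

/-- The central involution. -/
def aelt : H × Multiplicative (ZMod 2) := (1, Multiplicative.ofAdd 1)

lemma aelt_comm (v : H × Multiplicative (ZMod 2)) : v * aelt = aelt * v := by
  refine Prod.ext ?_ ?_
  · show v.1 * 1 = 1 * v.1; rw [mul_one, one_mul]
  · exact mul_comm _ _

lemma mul_aelt (h : H) (t : Multiplicative (ZMod 2)) :
    (h, t) * aelt = (h, t * Multiplicative.ofAdd 1) := Prod.ext (mul_one h) rfl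

lemma fix_partner (h1 : (1 : H) ∉ S) (hS : S⁻¹ = S)
    (hfix : ∀ b ∈ autGroup (cayley _ (Sa S)), b (1 : H × Multiplicative (ZMod 2)) = 1 →
      b aelt = aelt)
    {b : Equiv.Perm (H × Multiplicative (ZMod 2))} (hb : b ∈ autGroup (cayley _ (Sa S)))
    (v : H × Multiplicative (ZMod 2)) (hv : b v = v) : b (v * aelt) = v * aelt := by
  set c : Equiv.Perm (H × Multiplicative (ZMod 2)) :=
    Equiv.mulRight v⁻¹ * b * Equiv.mulRight v with hc
  have hcB : c ∈ autGroup (cayley _ (Sa S)) :=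
    (autGroup _).mul_mem ((autGroup _).mul_mem (mulRight_mem_autGroup _ _) hb)
      (mulRight_mem_autGroup _ _)
  have hceval : ∀ x, c x = b (x * v) * v⁻¹ := fun x => rfl
  have hc1 : c 1 = 1 := by
    rw [hceval, one_mul, hv, mul_inv_cancel]
  have := hfix c hcB hc1
  rw [hceval] at this
  have h2 : b (aelt * v) = aelt * v := by
    have := congrArg (· * v) this
    simpa [mul_assoc] using this
  rw [aelt_comm]
  exact h2

lemma aut_commute (h1 : (1 : H) ∉ S) (hS : S⁻¹ = S)
    (hfix : ∀ b ∈ autGroup (cayley _ (Sa S)), b (1 : H × Multiplicative (ZMod 2)) = 1 →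
      b aelt = aelt)
    {b : Equiv.Perm (H × Multiplicative (ZMod 2))} (hb : b ∈ autGroup (cayley _ (Sa S)))
    (v : H × Multiplicative (ZMod 2)) : b (v * aelt) = b v * aelt := by
  set c : Equiv.Perm (H × Multiplicative (ZMod 2)) :=
    Equiv.mulRight ((b v)⁻¹ * v) * b with hc
  have hcB : c ∈ autGroup (cayley _ (Sa S)) :=
    (autGroup _).mul_mem (mulRight_mem_autGroup _ _) hb
  have hceval : ∀ x, c x = b x * ((b v)⁻¹ * v) := fun x => rfl
  have hcv : c v = v := by rw [hceval, mul_inv_cancel_left]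
  have h2 := fix_partner h1 hS hfix hcB v hcv
  rw [hceval] at h2
  -- h2 : b (v * aelt) * ((b v)⁻¹ * v) = v * aelt
  have h3 := congrArg (· * ((b v)⁻¹ * v)⁻¹) h2
  simp only [mul_inv_cancel_right] at h3
  rw [h3]
  calc v * aelt * ((b v)⁻¹ * v)⁻¹
      = aelt * (v * (v⁻¹ * b v)) := by
        rw [mul_inv_rev, inv_inv, aelt_comm v, mul_assoc]
    _ = aelt * b v := by rw [mul_inv_cancel_left]
    _ = b v * aelt := (aelt_comm (b v)).symm

lemma parity_formula (h1 : (1 : H) ∉ S) (hS : S⁻¹ = S)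
    (hconn : (cayley H S).Connected) (hnb : ¬ (cayley H S).Colorable 2)
    {b : Equiv.Perm (H × Multiplicative (ZMod 2))} (hb : b ∈ autGroup (cayley _ (Sa S)))
    (v : H × Multiplicative (ZMod 2)) :
    Multiplicative.toAdd (b v).2 = Multiplicative.toAdd v.2
      + Multiplicative.toAdd (b 1).2 := by
  have := aut_parity h1 hS hconn hnb hb 1 v
  rw [show Multiplicative.toAdd ((1 : H × Multiplicative (ZMod 2))).2 = 0 from rfl] at this
  linear_combination this

/-- The full structural formula for automorphisms fixing the fibre data. -/
lemma aut_formula (h1 : (1 : H) ∉ S) (hS : S⁻¹ = S)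
    (hconn : (cayley H S).Connected) (hnb : ¬ (cayley H S).Colorable 2)
    (hfix : ∀ b ∈ autGroup (cayley _ (Sa S)), b (1 : H × Multiplicative (ZMod 2)) = 1 →
      b aelt = aelt)
    {b : Equiv.Perm (H × Multiplicative (ZMod 2))} (hb : b ∈ autGroup (cayley _ (Sa S)))
    (v : H × Multiplicative (ZMod 2)) :
    b v = ((b (v.1, 1)).1, v.2 * (b 1).2) := by
  have hsnd : ∀ w : H × Multiplicative (ZMod 2), w.2 = 1 → (b w).2 = (b 1).2 := by
    intro w hw
    have := parity_formula h1 hS hconn hnb hb w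
    rw [hw] at this
    rw [show Multiplicative.toAdd (1 : Multiplicative (ZMod 2)) = 0 from rfl, zero_add] at this
    exact Multiplicative.toAdd.injective this
  rcases M2_cases v.2 with hv | hv
  · have hveq : v = (v.1, 1) := Prod.ext rfl hv
    rw [hveq]
    refine Prod.ext rfl ?_
    show (b (v.1, 1)).2 = (1 : Multiplicative (ZMod 2)) * (b 1).2
    rw [one_mul]
    exact hsnd (v.1, 1) rfl
  · have hveq : v = (v.1, 1) * aelt := by
      rw [mul_aelt, one_mul]
      exact Prod.ext rfl hv
    rw [hveq, aut_commute h1 hS hfix hb]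
    refine Prod.ext ?_ ?_
    · show (b (v.1, 1)).1 * 1 = (b ((v.1 * 1 : H), (1 : Multiplicative (ZMod 2)))).1
      rw [mul_one, mul_one]
    · show (b (v.1, 1)).2 * Multiplicative.ofAdd 1
        = ((1 : Multiplicative (ZMod 2)) * Multiplicative.ofAdd 1) * (b 1).2
      rw [hsnd (v.1, 1) rfl, one_mul, mul_comm]

/-- The expected automorphisms of the double cover. -/
def expPerm (σ : Equiv.Perm H) (ε : Multiplicative (ZMod 2)) :
    Equiv.Perm (H × Multiplicative (ZMod 2)) :=
  Equiv.prodCongr σ (Equiv.mulRight ε)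

lemma expPerm_apply (σ : Equiv.Perm H) (ε : Multiplicative (ZMod 2))
    (v : H × Multiplicative (ZMod 2)) : expPerm σ ε v = (σ v.1, v.2 * ε) := rfl

lemma expPerm_mem (h1 : (1 : H) ∉ S) (hS : S⁻¹ = S) {σ : Equiv.Perm H}
    (hσ : σ ∈ autGroup (cayley H S)) (ε : Multiplicative (ZMod 2)) :
    expPerm σ ε ∈ autGroup (cayley _ (Sa S)) := by
  rw [mem_autGroup_iff]
  intro u v
  rw [expPerm_apply, expPerm_apply, delta_adj h1 hS, delta_adj h1 hS]
  have hsnd : v.2 * ε * (u.2 * ε)⁻¹ = v.2 * u.2⁻¹ := by group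
  rw [hsnd]
  have hfst : (σ v.1) * (σ u.1)⁻¹ ∈ S ↔ v.1 * u.1⁻¹ ∈ S := by
    rw [← cayley_adj h1 hS, ← cayley_adj h1 hS]
    exact hσ u.1 v.1
  rw [hfst]

lemma aut_eq_expected (h1 : (1 : H) ∉ S) (hS : S⁻¹ = S)
    (hconn : (cayley H S).Connected) (hnb : ¬ (cayley H S).Colorable 2)
    (hfix : ∀ b ∈ autGroup (cayley _ (Sa S)), b (1 : H × Multiplicative (ZMod 2)) = 1 →
      b aelt = aelt)
    {b : Equiv.Perm (H × Multiplicative (ZMod 2))} (hb : b ∈ autGroup (cayley _ (Sa S))) :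
    ∃ σ ∈ autGroup (cayley H S), ∃ ε : Multiplicative (ZMod 2), b = expPerm σ ε := by
  have hbinv : b⁻¹ ∈ autGroup (cayley _ (Sa S)) := (autGroup _).inv_mem hb
  have hF := aut_formula h1 hS hconn hnb hfix hb
  have hFinv := aut_formula h1 hS hconn hnb hfix hbinv
  have hli : ∀ h : H, (b⁻¹ ((b (h, 1)).1, 1)).1 = h := by
    intro h
    have h1' : b (h, 1) = ((b (h, 1)).1, (b 1).2) := by
      have := hF (h, 1)
      rwa [one_mul] at this
    have h2' : b⁻¹ ((b (h, 1)).1, (b 1).2) = (h, 1) := by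
      rw [← h1']
      exact b.symm_apply_apply _
    have h3' := hFinv ((b (h, 1)).1, (b 1).2)
    rw [h2'] at h3'
    have := congrArg Prod.fst h3'
    exact this.symm
  have hri : ∀ h : H, (b ((b⁻¹ (h, 1)).1, 1)).1 = h := by
    intro h
    have h1' : b⁻¹ (h, 1) = ((b⁻¹ (h, 1)).1, (b⁻¹ 1).2) := by
      have := hFinv (h, 1)
      rwa [one_mul] at this
    have h2' : b ((b⁻¹ (h, 1)).1, (b⁻¹ 1).2) = (h, 1) := by
      rw [← h1']
      exact b.apply_symm_apply _
    have h3' := hF ((b⁻¹ (h, 1)).1, (b⁻¹ 1).2)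
    rw [h2'] at h3'
    have := congrArg Prod.fst h3'
    exact this.symm
  set σ : Equiv.Perm H :=
    ⟨fun h => (b (h, 1)).1, fun h => (b⁻¹ (h, 1)).1, hli, hri⟩ with hσdef
  have hσmem : σ ∈ autGroup (cayley H S) := by
    rw [mem_autGroup_iff]
    intro u v
    have key : ∀ x y : H, (cayley H S).Adj x y ↔
        (cayley _ (Sa S)).Adj (x, 1) (y, Multiplicative.ofAdd 1) := by
      intro x y
      rw [delta_adj h1 hS, cayley_adj h1 hS]
      simp
    rw [key u v, key (σ u) (σ v)]
    rw [← hb (u, 1) (v, Multiplicative.ofAdd 1)]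
    rw [hF (u, 1), hF (v, Multiplicative.ofAdd 1)]
    rw [delta_adj h1 hS, delta_adj h1 hS]
    have : (Multiplicative.ofAdd 1 * (b 1).2) * ((1 : Multiplicative (ZMod 2)) * (b 1).2)⁻¹
        = Multiplicative.ofAdd 1 * (1 : Multiplicative (ZMod 2))⁻¹ := by group
    rw [this]
    constructor
    · rintro ⟨hs, -⟩
      refine ⟨hs, ?_⟩
      show Multiplicative.ofAdd (1 : ZMod 2) * (1 : Multiplicative (ZMod 2))⁻¹
        = Multiplicative.ofAdd 1
      decide
    · rintro ⟨hs, -⟩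
      refine ⟨hs, ?_⟩
      show Multiplicative.ofAdd (1 : ZMod 2) * (1 : Multiplicative (ZMod 2))⁻¹
        = Multiplicative.ofAdd 1
      decide
  refine ⟨σ, hσmem, (b 1).2, ?_⟩
  refine Equiv.ext fun v => ?_
  rw [expPerm_apply, hF v]
  rfl

end Part4

section Part5

variable {H : Type*} [Group H] [Fintype H] {S : Set H}

/-- The expected subgroup of automorphisms of the double cover. -/
def expHom (h1 : (1 : H) ∉ S) (hS : S⁻¹ = S) :
    (↥(autGroup (cayley H S)) × Multiplicative (ZMod 2)) →*
      ↥(autGroup (cayley _ (Sa S))) where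
  toFun p := ⟨expPerm p.1.1 p.2, expPerm_mem h1 hS p.1.2 p.2⟩
  map_one' := by
    refine Subtype.ext (Equiv.ext fun v => ?_)
    rw [expPerm_apply]
    exact Prod.ext rfl (mul_one v.2)
  map_mul' p q := by
    refine Subtype.ext (Equiv.ext fun v => ?_)
    show expPerm (p.1.1 * q.1.1) (p.2 * q.2) v
      = expPerm p.1.1 p.2 (expPerm q.1.1 q.2 v)
    rw [expPerm_apply, expPerm_apply, expPerm_apply]
    refine Prod.ext rfl ?_
    show v.2 * (p.2 * q.2) = (v.2 * q.2) * p.2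
    rw [mul_comm p.2 q.2, mul_assoc]

lemma expHom_injective (h1 : (1 : H) ∉ S) (hS : S⁻¹ = S) :
    Function.Injective (expHom h1 hS) := by
  intro p q h
  have h' : expPerm p.1.1 p.2 = expPerm q.1.1 q.2 := Subtype.ext_iff.mp h
  have heval : ∀ x : H, expPerm p.1.1 p.2 (x, 1) = expPerm q.1.1 q.2 (x, 1) :=
    fun x => by rw [h']
  have hfst : ∀ x : H, p.1.1 x = q.1.1 x := fun x =>
    congrArg Prod.fst (heval x)
  have hsnd : p.2 = q.2 := by
    have := congrArg Prod.snd (heval 1)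
    simpa [expPerm_apply] using this
  exact Prod.ext (Subtype.ext (Equiv.ext hfst)) hsnd

/-- The double cover as the Cayley graph of `H × Z₂`. -/
def coverIso (h1 : (1 : H) ∉ S) (hS : S⁻¹ = S) :
    ↥(autGroup (cayley _ (Sa S))) ≃* ↥(autGroup (doubleCover (cayley H S))) := by
  refine autGroupCongr (Equiv.prodCongr (Equiv.refl H) Multiplicative.toAdd) _ _ ?_
  intro u v
  show ((cayley H S).Adj u.1 v.1 ∧ Multiplicative.toAdd u.2 ≠ Multiplicative.toAdd v.2) ↔ _
  rw [delta_adj h1 hS, cayley_adj h1 hS, M2_mul_inv_iff u.2 v.2]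
  have : Multiplicative.toAdd u.2 ≠ Multiplicative.toAdd v.2 ↔ u.2 ≠ v.2 := by
    constructor
    · intro hne heq; exact hne (by rw [heq])
    · intro hne heq; exact hne (Multiplicative.toAdd.injective heq)
  rw [this]

lemma forward_iso (h1 : (1 : H) ∉ S) (hS : S⁻¹ = S)
    (hconn : (cayley H S).Connected) (hnb : ¬ (cayley H S).Colorable 2)
    (hfix : ∀ b ∈ autGroup (cayley _ (Sa S)), b (1 : H × Multiplicative (ZMod 2)) = 1 →
      b aelt = aelt) :
    Nonempty (↥(autGroup (doubleCover (cayley H S))) ≃*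
      (↥(autGroup (cayley H S)) × Multiplicative (ZMod 2))) := by
  have hsurj : Function.Surjective (expHom h1 hS) := by
    rintro ⟨b, hb⟩
    obtain ⟨σ, hσ, ε, rfl⟩ := aut_eq_expected h1 hS hconn hnb hfix hb
    exact ⟨(⟨σ, hσ⟩, ε), rfl⟩
  have Ψ := MulEquiv.ofBijective (expHom h1 hS) ⟨expHom_injective h1 hS, hsurj⟩
  exact ⟨((coverIso h1 hS).symm.trans Ψ.symm)⟩

lemma converse_unstable (h1 : (1 : H) ∉ S) (hS : S⁻¹ = S)
    (hconn : (cayley H S).Connected) (hnb : ¬ (cayley H S).Colorable 2)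
    {b : Equiv.Perm (H × Multiplicative (ZMod 2))} (hb : b ∈ autGroup (cayley _ (Sa S)))
    (hb1 : b 1 = 1) (hba : b aelt ≠ aelt) : Unstable (cayley H S) := by
  rintro ⟨ψ⟩
  classical
  set Δaut := autGroup (cayley _ (Sa S)) with hΔ
  have φ : ↥Δaut ≃* (↥(autGroup (cayley H S)) × Multiplicative (ZMod 2)) :=
    (coverIso h1 hS).trans ψ
  set E : Subgroup ↥Δaut := (expHom h1 hS).range with hE
  have hbE : (⟨b, hb⟩ : ↥Δaut) ∉ E := by
    rintro ⟨⟨⟨σ, hσ⟩, ε⟩, hexp⟩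
    have h' : expPerm σ ε = b := Subtype.ext_iff.mp hexp
    have h1' : expPerm σ ε (1, 1) = ((1 : H), (1 : Multiplicative (ZMod 2))) := by
      rw [h']; exact hb1
    have hε : ε = 1 := by
      have := congrArg Prod.snd h1'
      simpa [expPerm_apply] using this
    have hσ1 : σ 1 = 1 := congrArg Prod.fst h1'
    apply hba
    rw [← h']
    show ((σ 1 : H), Multiplicative.ofAdd (1 : ZMod 2) * ε) = aelt
    rw [hσ1, hε, mul_one]
    rfl
  have hne : (E : Set ↥Δaut) ≠ Set.univ := by
    intro heq
    exact hbE (by rw [← SetLike.mem_coe, heq]; trivial)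
  have hss : (E : Set ↥Δaut) ⊂ Set.univ := Set.ssubset_univ_iff.mpr hne
  have hlt : ((E : Set ↥Δaut)).ncard < (Set.univ : Set ↥Δaut).ncard :=
    Set.ncard_lt_ncard hss Set.finite_univ
  have hcard1 : Nat.card ↥E = ((E : Set ↥Δaut)).ncard := Nat.card_coe_set_eq _
  have hcard2 : (Set.univ : Set ↥Δaut).ncard = Nat.card ↥Δaut := Set.ncard_univ _
  have hcard3 : Nat.card ↥E
      = Nat.card (↥(autGroup (cayley H S)) × Multiplicative (ZMod 2)) :=
    (Nat.card_congr (MonoidHom.ofInjective (expHom_injective h1 hS)).toEquiv).symm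
  have hcard4 : Nat.card ↥Δaut
      = Nat.card (↥(autGroup (cayley H S)) × Multiplicative (ZMod 2)) :=
    Nat.card_congr φ.toEquiv
  omega

end Part5


theorem stmt10 {H : Type*} [Group H] [Fintype H] (S : Set H)
    (h1 : (1 : H) ∉ S) (hS : S⁻¹ = S)
    (hconn : (cayley H S).Connected) (hnb : ¬ (cayley H S).Colorable 2) :
    Unstable (cayley H S) ↔
      ∃ A : SchurRing (H × Multiplicative (ZMod 2)),
        IsSchurian A ∧
        A.isASet (Set.range fun h : H => (h, (1 : Multiplicative (ZMod 2)))) ∧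
        A.isASet ((fun s => (s, Multiplicative.ofAdd (1 : ZMod 2))) '' S) ∧
        ¬ A.isASet {((1 : H), Multiplicative.ofAdd (1 : ZMod 2))} := by
  constructor
  · -- Unstable → Schur ring exists
    intro hU
    have hBr : ∀ g : H × Multiplicative (ZMod 2),
        Equiv.mulRight g ∈ autGroup (cayley _ (Sa S)) :=
      fun g => mulRight_mem_autGroup _ g
    refine ⟨transModule _ hBr, transModule_isSchurian _ hBr, ?_, ?_, ?_⟩
    · rw [transModule_isASet_iff]
      rintro c g ⟨h, hh⟩
      set cp : Equiv.Perm (H × Multiplicative (ZMod 2)) :=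
        ((c : autGroup (cayley _ (Sa S))) : Equiv.Perm (H × Multiplicative (ZMod 2))) with hcp
      have hc1 : cp 1 = 1 := c.2
      have hpar := parity_formula h1 hS hconn hnb
        ((c : autGroup (cayley _ (Sa S))).2) g
      rw [hc1] at hpar
      have hg2 : g.2 = 1 := by rw [← hh]
      rw [hg2] at hpar
      have hsnd : (cp g).2 = 1 := by
        apply Multiplicative.toAdd.injective
        rw [hpar]
        rfl
      exact ⟨(cp g).1, Prod.ext rfl hsnd.symm⟩
    · rw [transModule_isASet_iff]
      intro c g hg
      set cp : Equiv.Perm (H × Multiplicative (ZMod 2)) :=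
        ((c : autGroup (cayley _ (Sa S))) : Equiv.Perm (H × Multiplicative (ZMod 2))) with hcp
      have hc1 : cp 1 = 1 := c.2
      have hg' : g ∈ Sa S := hg
      rw [mem_Sa] at hg'
      have hadj : (cayley _ (Sa S)).Adj 1 g := by
        rw [delta_adj h1 hS]
        constructor
        · simpa using hg'.1
        · simpa using hg'.2
      have hadj2 := ((c : autGroup (cayley _ (Sa S))).2 1 g).mpr hadj
      rw [hc1] at hadj2
      rw [delta_adj h1 hS] at hadj2
      show cp g ∈ Sa S
      rw [mem_Sa]
      refine ⟨by simpa using hadj2.1, by simpa using hadj2.2⟩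
    · intro hA
      apply hU
      apply forward_iso h1 hS hconn hnb
      intro b hb hb1
      have hstab : (⟨b, hb⟩ : autGroup (cayley _ (Sa S))) • (1 : H × Multiplicative (ZMod 2)) = 1 := hb1
      have := (transModule_isASet_iff _ hBr _).mp hA ⟨⟨b, hb⟩, hstab⟩ aelt rfl
      exact this
  · -- Schur ring exists → Unstable
    rintro ⟨A, ⟨B, hBr, hP⟩, -, hSaA, hna⟩
    have hiff : ∀ s : Set (H × Multiplicative (ZMod 2)), A.isASet s ↔
        ∀ (c : MulAction.stabilizer B (1 : H × Multiplicative (ZMod 2)))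
          (g : H × Multiplicative (ZMod 2)), g ∈ s → ((c : B) : Equiv.Perm (H × Multiplicative (ZMod 2))) g ∈ s := by
      intro s
      have h0 : A.isASet s ↔ clsum s ∈ Submodule.span ℤ (clsum '' A.P) := Iff.rfl
      rw [h0, hP]
      exact isaset_iff_invariant B s
    have hSaInv := (hiff _).mp hSaA
    have hBle : ∀ b ∈ B, b ∈ autGroup (cayley _ (Sa S)) := by
      intro b hbB
      rw [mem_autGroup_iff]
      intro u v
      rw [cayley_adj (one_not_mem_Sa h1) (Sa_inv hS),
        cayley_adj (one_not_mem_Sa h1) (Sa_inv hS)]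
      constructor
      · intro hmem
        obtain ⟨d, hd⟩ := exists_translate B hBr b⁻¹ (B.inv_mem hbB) (b u)
        have hm := hSaInv d (b v * (b u)⁻¹) hmem
        rw [hd, inv_mul_cancel_right] at hm
        rw [show (b⁻¹ : Equiv.Perm (H × Multiplicative (ZMod 2))) (b v) = v from b.symm_apply_apply v,
          show (b⁻¹ : Equiv.Perm (H × Multiplicative (ZMod 2))) (b u) = u from b.symm_apply_apply u] at hm
        exact hm
      · intro hmem
        obtain ⟨d, hd⟩ := exists_translate B hBr b hbB u
        have hm := hSaInv d (v * u⁻¹) hmem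
        rw [hd, inv_mul_cancel_right] at hm
        exact hm
    have hbad : ∃ c : MulAction.stabilizer B (1 : H × Multiplicative (ZMod 2)),
        ((c : B) : Equiv.Perm (H × Multiplicative (ZMod 2))) aelt ≠ aelt := by
      by_contra hno
      push_neg at hno
      apply hna
      refine (hiff _).mpr ?_
      intro c g hg
      rw [Set.mem_singleton_iff] at hg
      rw [Set.mem_singleton_iff, hg]
      exact hno c
    obtain ⟨c, hca⟩ := hbad
    exact converse_unstable h1 hS hconn hnb (hBle _ ((c : B)).2)
      (show ((c : B) : Equiv.Perm (H × Multiplicative (ZMod 2))) 1 = 1 from c.2) hca
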